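/- For any n×n matrix A over a field F, the rank function is convex: for all m ∈ ℕ, rank(A^m) + rank(A^{m+2}) ≥ 2·rank(A^{m+1}). -/
import Mathlib

open Module Submodule LinearMap

private lemma aux_finrank_map {F : Type*} [Field F] {V : Type*} [AddCommGroup V]
    [Module F V] [FiniteDimensional F V] (f : V →ₗ[F] V) (W : Submodule F V) :
    finrank F (W.map f) + finrank F (LinearMap.ker f ⊓ W : Submodule F V) = finrank F W := by
  have h := (f ∘ₗ W.subtype).finrank_range_add_finrank_ker
  rw [LinearMap.range_comp, Submodule.range_subtype] at h
  have hk : LinearMap.ker (f ∘ₗ W.subtype) = Submodule.comap W.subtype (LinearMap.ker f ⊓ W) := by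
    ext x; simp [LinearMap.mem_ker]
  rw [hk, (Submodule.comapSubtypeEquivOfLe
    (inf_le_right : LinearMap.ker f ⊓ W ≤ W)).finrank_eq] at h
  simpa using h

private lemma aux_mulVecLin_pow {F : Type*} [Field F] {n : ℕ}
    (A : Matrix (Fin n) (Fin n) F) (k : ℕ) :
    (A ^ k).mulVecLin = (A.mulVecLin) ^ k := by
  induction k with
  | zero => simp [Module.End.one_eq_id]
  | succ k ih => rw [pow_succ, pow_succ, Matrix.mulVecLin_mul, ih]; rfl

theorem rank_pow_convex {F : Type*} [Field F] {n : ℕ}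
    (A : Matrix (Fin n) (Fin n) F) :
    ∀ m : ℕ, (A ^ m).rank + (A ^ (m + 2)).rank ≥ 2 * (A ^ (m + 1)).rank := by
  intro m
  set f := A.mulVecLin with hf
  have hrank : ∀ k : ℕ, (A ^ k).rank = finrank F (LinearMap.range (f ^ k)) := by
    intro k; rw [Matrix.rank, aux_mulVecLin_pow]
  have hrange : ∀ k : ℕ, LinearMap.range (f ^ (k + 1)) = (LinearMap.range (f ^ k)).map f := by
    intro k
    rw [pow_succ', Module.End.mul_eq_comp, LinearMap.range_comp]
  have hstep : ∀ k : ℕ, (A ^ k).rank =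
      (A ^ (k + 1)).rank + finrank F (LinearMap.ker f ⊓ LinearMap.range (f ^ k) : Submodule F _) := by
    intro k
    rw [hrank, hrank, hrange,
      add_comm ((finrank F ((LinearMap.range (f ^ k)).map f))) _,
      ← aux_finrank_map f (LinearMap.range (f ^ k))]
    ring
  have hmono : LinearMap.range (f ^ (m + 1)) ≤ LinearMap.range (f ^ m) := by
    rw [pow_succ, Module.End.mul_eq_comp]; exact LinearMap.range_comp_le_range _ _
  have hle : finrank F (LinearMap.ker f ⊓ LinearMap.range (f ^ (m + 1)) : Submodule F _) ≤
      finrank F (LinearMap.ker f ⊓ LinearMap.range (f ^ m) : Submodule F _) :=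
    Submodule.finrank_mono (inf_le_inf_left _ hmono)
  have h1 := hstep m
  have h2 := hstep (m + 1)
  rw [show m + 1 + 1 = m + 2 from rfl] at h2
  omega
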